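/- For all real numbers Q and λ with 0 < Q ≤ 1 and 0 ≤ λ ≤ 1/2, we have exp(-(Q - λQ³)^(-2)) ≤ (1 - λ)·exp(-Q^(-2)). -/
import Mathlib


theorem stmt_0 (Q lam : ℝ) (hQ0 : 0 < Q) (hQ1 : Q ≤ 1)
    (hl0 : 0 ≤ lam) (hl1 : lam ≤ 1/2) :
    Real.exp (-((Q - lam * Q^3)^2)⁻¹) ≤ (1 - lam) * Real.exp (-(Q^2)⁻¹) := by
  have hQ2 : Q^2 ≤ 1 := by nlinarith
  have ht0 : 0 ≤ lam * Q^2 := by positivity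
  have ht1 : lam * Q^2 ≤ 1/2 := by nlinarith
  have hpos : 0 < Q - lam * Q^3 := by nlinarith
  have hA : (0:ℝ) < (Q - lam * Q^3)^2 := by positivity
  have hB : (0:ℝ) < Q^2 := by positivity
  -- key: -A⁻¹ ≤ -2λ + (-B⁻¹)
  have key : -((Q - lam * Q^3)^2)⁻¹ ≤ -2*lam + -(Q^2)⁻¹ := by
    have h3 : (0:ℝ) ≤ 3 - 2*(lam*Q^2) := by linarith
    have hmain : (Q - lam * Q^3)^2 - Q^2 ≤ -2*lam * (Q^2 * (Q - lam * Q^3)^2) := by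
      nlinarith [mul_nonneg (mul_nonneg (sq_nonneg Q) (sq_nonneg (lam*Q^2))) h3]
    have : (Q^2)⁻¹ - ((Q - lam * Q^3)^2)⁻¹ ≤ -2*lam := by
      rw [inv_eq_one_div, inv_eq_one_div,
        div_sub_div _ _ (ne_of_gt hB) (ne_of_gt hA), div_le_iff₀ (by positivity)]
      linarith [hmain]
    linarith
  have hexp : Real.exp (-((Q - lam * Q^3)^2)⁻¹)
      ≤ Real.exp (-2*lam) * Real.exp (-(Q^2)⁻¹) := by
    rw [← Real.exp_add]
    exact Real.exp_le_exp.mpr key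
  have hel : Real.exp (-2*lam) ≤ 1 - lam := by
    have h1 : 1 + 2*lam ≤ Real.exp (2*lam) := by
      have := Real.add_one_le_exp (2*lam); linarith
    have h2 : Real.exp (-2*lam) = (Real.exp (2*lam))⁻¹ := by
      rw [← Real.exp_neg]; ring_nf
    rw [h2, inv_le_iff_one_le_mul₀ (Real.exp_pos _)] <;>
      nlinarith [Real.exp_pos (2*lam)]
  calc Real.exp (-((Q - lam * Q^3)^2)⁻¹)
      ≤ Real.exp (-2*lam) * Real.exp (-(Q^2)⁻¹) := hexp
    _ ≤ (1 - lam) * Real.exp (-(Q^2)⁻¹) := by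
        exact mul_le_mul_of_nonneg_right hel (Real.exp_pos _).le
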